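/- Let λ ≥ 2 be real, T ∈ (0,∞], and let v : [0,T) → ℝ be twice continuously differentiable with v(0) = 1, v'(0) = 1, satisfying v''(r) = −λ·[ (1+v'(r)^2)^{1/2}/(r^2+v(r)^2)^{λ/2} + (r·v'(r) − v(r))/(r^2+v(r)^2) ]·(1+v'(r)^2) for all r ∈ [0,T). Then there exists δ₀ ∈ (0, 1/√λ) such that for every δ with 0 < δ < min(δ₀, T): v(r) − δ·v'(r) > 0 for all r ∈ [δ, T), and consequently v(r) ≤ v(δ)·e^{r/δ} and v'(r) ≤ (v(δ)/δ)·e^{r/δ} for all r ∈ [δ, T). In particular, v and v' remain bounded on any bounded subinterval, so the solution extends past any finite time. -/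

import Mathlib

open Set Filter

lemma pos_on_Icc_of_pos_left {a b : ℝ} {f f' : ℝ → ℝ}
    (hf : ∀ x ∈ Set.Icc a b, HasDerivWithinAt f (f' x) (Set.Icc a b) x)
    (ha : 0 < f a)
    (key : ∀ x ∈ Set.Ioc a b, f x = 0 → (∀ y ∈ Set.Ico a x, 0 < f y) → 0 < f' x) :
    ∀ x ∈ Set.Icc a b, 0 < f x := by
  by_contra h
  push_neg at h
  obtain ⟨x₀, hx₀, hfx₀⟩ := h
  have hcont : ContinuousOn f (Set.Icc a b) := fun x hx => (hf x hx).continuousWithinAt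
  set S : Set ℝ := {x | x ∈ Set.Icc a b ∧ f x ≤ 0} with hS
  have hSne : S.Nonempty := ⟨x₀, hx₀, hfx₀⟩
  have hSclosed : IsClosed S := by
    have hrw : S = Set.Icc a b ∩ f ⁻¹' Set.Iic 0 := by
      ext y
      simp only [hS, Set.mem_setOf_eq, Set.mem_inter_iff, Set.mem_preimage, Set.mem_Iic]
    rw [hrw]
    exact hcont.preimage_isClosed_of_isClosed isClosed_Icc isClosed_Iic
  have hbdd : BddBelow S := ⟨a, fun y hy => hy.1.1⟩
  set s := sInf S with hs
  have hsS : s ∈ S := hSclosed.csInf_mem hSne hbdd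
  have hsab : s ∈ Set.Icc a b := hsS.1
  have has : a < s := by
    rcases lt_or_eq_of_le hsab.1 with h | h
    · exact h
    · exfalso; rw [← h] at hsS; exact absurd hsS.2 (not_le.mpr ha)
  have hsub : Set.Ico a s ⊆ Set.Icc a b := fun y hy => ⟨hy.1, hy.2.le.trans hsab.2⟩
  have hpos_before : ∀ y ∈ Set.Ico a s, 0 < f y := by
    intro y hy
    by_contra hy'
    push_neg at hy'
    have hmem : y ∈ S := ⟨hsub hy, hy'⟩
    exact absurd (csInf_le hbdd hmem) (not_le.mpr hy.2)
  have hclos : s ∈ closure (Set.Ico a s) := by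
    rw [closure_Ico has.ne]; exact ⟨has.le, le_rfl⟩
  have hnebot : (nhdsWithin s (Set.Ico a s)).NeBot :=
    mem_closure_iff_nhdsWithin_neBot.mp hclos
  have hfs0 : f s = 0 := by
    refine le_antisymm hsS.2 ?_
    have hct : ContinuousWithinAt f (Set.Ico a s) s := (hcont s hsab).mono hsub
    exact ge_of_tendsto hct (eventually_of_mem self_mem_nhdsWithin
      (fun y hy => (hpos_before y hy).le))
  have hkey := key s ⟨has, hsab.2⟩ hfs0 hpos_before
  have hd : HasDerivWithinAt f (f' s) (Set.Ico a s) s := (hf s hsab).mono hsub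
  have hdiff : Set.Ico a s \ {s} = Set.Ico a s := by
    ext y
    simp only [Set.mem_diff, Set.mem_singleton_iff]
    exact ⟨fun h => h.1, fun h => ⟨h, h.2.ne⟩⟩
  have hslope : Filter.Tendsto (slope f s) (nhdsWithin s (Set.Ico a s))
      (nhds (f' s)) := by
    have := hasDerivWithinAt_iff_tendsto_slope.mp hd
    rwa [hdiff] at this
  have hle : f' s ≤ 0 := by
    refine le_of_tendsto hslope (eventually_of_mem self_mem_nhdsWithin ?_)
    intro y hy
    have h1 : slope f s y = f y / (y - s) := by
      rw [slope_def_field, hfs0, sub_zero]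
    rw [h1]
    exact (div_neg_of_pos_of_neg (hpos_before y hy) (by linarith [hy.2])).le
  linarith

/-- (Growth bound from the proof of Proposition `prop41` of
Chen–Warren.)  Let `λ ≥ 2`, `T ∈ (0,∞]`, and let `v : [0,T) → ℝ` be twice
continuously differentiable with `v(0) = 1`, `v'(0) = 1`, solving
`v'' = −λ [√(1+(v')²)/(r²+v²)^{λ/2} + (r v' − v)/(r²+v²)] (1+(v')²)` on `[0,T)`.
Then there is `δ₀ ∈ (0, 1/√λ)` such that for every `0 < δ < min(δ₀, T)`:
`v − δ v' > 0` on `[δ,T)`, hence `v(r) ≤ v(δ) e^{r/δ}` and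
`v'(r) ≤ (v(δ)/δ) e^{r/δ}` on `[δ,T)`; in particular `v, v'` stay bounded on
bounded subintervals. -/
theorem solution_exponential_bound
    (l : ℝ) (hl : 2 ≤ l) (T : EReal) (hT : 0 < T)
    (v v' v'' : ℝ → ℝ)
    (I : Set ℝ) (hI : I = {r : ℝ | 0 ≤ r ∧ (r : EReal) < T})
    (hd1 : ∀ r ∈ I, HasDerivWithinAt v (v' r) I r)
    (hd2 : ∀ r ∈ I, HasDerivWithinAt v' (v'' r) I r)
    (hc : ContinuousOn v'' I)
    (h0 : v 0 = 1) (h0' : v' 0 = 1)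
    (hode : ∀ r ∈ I, v'' r
      = -l * (Real.sqrt (1 + (v' r) ^ 2) / (r ^ 2 + (v r) ^ 2) ^ (l / 2)
            + (r * v' r - v r) / (r ^ 2 + (v r) ^ 2)) * (1 + (v' r) ^ 2)) :
    ∃ δ₀ : ℝ, 0 < δ₀ ∧ δ₀ < 1 / Real.sqrt l ∧
      ∀ δ : ℝ, 0 < δ → δ < δ₀ → (δ : EReal) < T →
        ∀ r ∈ I, δ ≤ r →
          0 < v r - δ * v' r ∧
          v r ≤ v δ * Real.exp (r / δ) ∧
          v' r ≤ (v δ / δ) * Real.exp (r / δ) := by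
  have hl0 : (0:ℝ) < l := by linarith
  have hImem : ∀ {x b : ℝ}, b ∈ I → 0 ≤ x → x ≤ b → x ∈ I := by
    intro x b hb hx0 hxb
    rw [hI] at hb ⊢
    exact ⟨hx0, lt_of_le_of_lt (EReal.coe_le_coe_iff.mpr hxb) hb.2⟩
  have h0I : (0:ℝ) ∈ I := by
    rw [hI]; exact ⟨le_rfl, by rwa [EReal.coe_zero]⟩
  have hIr0 : ∀ r ∈ I, 0 ≤ r := by intro r hr; rw [hI] at hr; exact hr.1
  have hsubI : ∀ b ∈ I, Set.Icc 0 b ⊆ I := fun b hb x hx => hImem hb hx.1 hx.2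
  have hvc : ContinuousOn v I := fun x hx => (hd1 x hx).continuousWithinAt
  have hv'c : ContinuousOn v' I := fun x hx => (hd2 x hx).continuousWithinAt
  -- Step 1: v' > 0 on I
  have hv'pos : ∀ r ∈ I, 0 < v' r := by
    intro r hrI
    have hr0 : 0 ≤ r := hIr0 r hrI
    have hsub : Set.Icc 0 r ⊆ I := hsubI r hrI
    refine pos_on_Icc_of_pos_left (f := v') (f' := v'')
      (fun x hx => (hd2 x (hsub hx)).mono hsub) (by rw [h0']; norm_num) ?_ r ⟨hr0, le_rfl⟩
    intro x hx hfx hbefore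
    have hxI : x ∈ I := hsub ⟨hx.1.le, hx.2⟩
    have hmono : StrictMonoOn v (Set.Icc 0 x) := by
      apply strictMonoOn_of_deriv_pos (convex_Icc 0 x)
        (hvc.mono (fun y hy => hsub ⟨hy.1, hy.2.trans hx.2⟩))
      intro y hy
      rw [interior_Icc] at hy
      have hyI : y ∈ I := hsub ⟨hy.1.le, hy.2.le.trans hx.2⟩
      have hIy : I ∈ nhds y := mem_nhds_iff.mpr
        ⟨Set.Ioo 0 x, fun z hz => hsub ⟨hz.1.le, hz.2.le.trans hx.2⟩, isOpen_Ioo, hy⟩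
      rw [((hd1 y hyI).hasDerivAt hIy).deriv]
      exact hbefore y ⟨hy.1.le, hy.2⟩
    have hvx1 : 1 < v x := by
      have hlt := hmono (Set.left_mem_Icc.mpr hx.1.le) (Set.right_mem_Icc.mpr hx.1.le) hx.1
      rwa [h0] at hlt
    set X := x ^ 2 + v x ^ 2 with hX
    have hX1 : 1 < X := by nlinarith
    have hX0 : (0:ℝ) < X := by linarith
    have hXl : X ≤ X ^ (l / 2) := by
      calc X = X ^ (1:ℝ) := (Real.rpow_one X).symm
      _ ≤ X ^ (l / 2) := Real.rpow_le_rpow_of_exponent_le hX1.le (by linarith)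
    have hXpow_pos : (0:ℝ) < X ^ (l / 2) := Real.rpow_pos_of_pos hX0 _
    have h1 : 1 / X ^ (l / 2) < v x / X := by
      calc 1 / X ^ (l / 2) ≤ 1 / X := by gcongr
      _ < v x / X := by gcongr
    have hval : v'' x = -l * (1 / X ^ (l / 2) + (- v x) / X) := by
      rw [hode x hxI, hfx]
      norm_num
      exact Or.inl rfl
    rw [hval, show -l * (1 / X ^ (l / 2) + -v x / X) = l * (v x / X - 1 / X ^ (l / 2)) by ring]
    exact mul_pos hl0 (by linarith)
  -- v is strictly monotone on initial segments, v ≥ 1 on I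
  have hmono : ∀ b ∈ I, StrictMonoOn v (Set.Icc 0 b) := by
    intro b hb
    apply strictMonoOn_of_deriv_pos (convex_Icc 0 b) (hvc.mono (hsubI b hb))
    intro y hy
    rw [interior_Icc] at hy
    have hyI : y ∈ I := hsubI b hb ⟨hy.1.le, hy.2.le⟩
    have hIy : I ∈ nhds y := mem_nhds_iff.mpr
      ⟨Set.Ioo 0 b, (Set.Ioo_subset_Icc_self).trans (hsubI b hb), isOpen_Ioo, hy⟩
    rw [((hd1 y hyI).hasDerivAt hIy).deriv]
    exact hv'pos y hyI
  have hv1 : ∀ r ∈ I, 1 ≤ v r := by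
    intro r hrI
    rcases eq_or_lt_of_le (hIr0 r hrI) with h | h
    · rw [← h, h0]
    · have hlt := hmono r hrI (Set.left_mem_Icc.mpr (hIr0 r hrI))
        (Set.right_mem_Icc.mpr (hIr0 r hrI)) h
      rw [h0] at hlt
      exact hlt.le
  -- continuity of v' at 0 gives a neighborhood where v' < 2
  obtain ⟨δ₁, hδ₁pos, hδ₁⟩ : ∃ δ₁ > 0, ∀ r ∈ I, dist r 0 < δ₁ → dist (v' r) (v' 0) < 1 :=
    Metric.continuousWithinAt_iff.mp (hv'c 0 h0I) 1 one_pos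
  have hv'lt2 : ∀ r ∈ I, r < δ₁ → v' r < 2 := by
    intro r hrI hr
    have hd := hδ₁ r hrI (by rw [Real.dist_eq, sub_zero, abs_of_nonneg (hIr0 r hrI)]; exact hr)
    rw [h0', Real.dist_eq] at hd
    have := abs_lt.mp hd
    linarith [this.1, this.2]
  have hsl : (0:ℝ) < Real.sqrt l := Real.sqrt_pos.mpr hl0
  have hsl1 : 1 < Real.sqrt l := by
    rw [show (1:ℝ) = Real.sqrt 1 by simp]
    exact Real.sqrt_lt_sqrt (by norm_num) (by linarith)
  refine ⟨min δ₁ (1 / (2 * Real.sqrt l)), lt_min hδ₁pos (by positivity), ?_, ?_⟩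
  · have h2 : 1 / (2 * Real.sqrt l) < 1 / Real.sqrt l := by
      rw [div_lt_div_iff₀ (by positivity) hsl]
      nlinarith
    exact lt_of_le_of_lt (min_le_right _ _) h2
  intro δ hδpos hδlt hδT r hrI hδr
  have hδδ₁ : δ < δ₁ := lt_of_lt_of_le hδlt (min_le_left _ _)
  have hδhalf : δ < 1 / 2 := by
    have h3 : δ < 1 / (2 * Real.sqrt l) := lt_of_lt_of_le hδlt (min_le_right _ _)
    have h4 : 1 / (2 * Real.sqrt l) < 1 / 2 := by
      rw [div_lt_div_iff₀ (by positivity) (by norm_num : (0:ℝ) < 2)]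
      nlinarith
    linarith
  have hδI : δ ∈ I := by rw [hI]; exact ⟨hδpos.le, hδT⟩
  have hsub2 : Set.Icc δ r ⊆ I := fun y hy => hImem hrI (hδpos.le.trans hy.1) hy.2
  have hwδ : 0 < v δ - δ * v' δ := by
    have h5 : v' δ < 2 := hv'lt2 δ hδI hδδ₁
    have h6 : 1 ≤ v δ := hv1 δ hδI
    nlinarith [hv'pos δ hδI]
  -- positivity of w = v - δ v' on [δ, r]
  have wpos : ∀ x ∈ Set.Icc δ r, 0 < v x - δ * v' x := by
    refine pos_on_Icc_of_pos_left (f := fun s => v s - δ * v' s)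
      (f' := fun s => v' s - δ * v'' s) ?_ hwδ ?_
    · intro x hx
      have hxI : x ∈ I := hsub2 hx
      exact ((hd1 x hxI).sub ((hd2 x hxI).const_mul δ)).mono hsub2
    · intro x hx hfx hbefore
      have hxI : x ∈ I := hsub2 ⟨hx.1.le, hx.2⟩
      have hp : 0 < v' x := hv'pos x hxI
      have hfx' : v x - δ * v' x = 0 := hfx
      have hvx1 : 1 ≤ v x := hv1 x hxI
      have hXp : (0:ℝ) < x ^ 2 + v x ^ 2 := by nlinarith
      have hA : 0 < Real.sqrt (1 + v' x ^ 2) / (x ^ 2 + v x ^ 2) ^ (l / 2) :=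
        div_pos (Real.sqrt_pos.mpr (by positivity)) (Real.rpow_pos_of_pos hXp _)
      have hB : 0 ≤ (x * v' x - v x) / (x ^ 2 + v x ^ 2) := by
        apply div_nonneg _ hXp.le
        have hxδ : δ ≤ x := hx.1.le
        nlinarith
      have hq : (0:ℝ) < 1 + v' x ^ 2 := by positivity
      have hAB : 0 < Real.sqrt (1 + v' x ^ 2) / (x ^ 2 + v x ^ 2) ^ (l / 2)
          + (x * v' x - v x) / (x ^ 2 + v x ^ 2) := by linarith
      have hv''neg : v'' x < 0 := by
        rw [hode x hxI]
        nlinarith [mul_pos (mul_pos hl0 hAB) hq]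
      show 0 < v' x - δ * v'' x
      have h7 : δ * v'' x < 0 := mul_neg_of_pos_of_neg hδpos hv''neg
      linarith
  have hwr : 0 < v r - δ * v' r := wpos r ⟨hδr, le_rfl⟩
  have hvδ1 : 1 ≤ v δ := hv1 δ hδI
  -- the auxiliary function g s = v s * exp (-(s/δ)) is antitone on [δ,r]
  have hgd : ∀ y ∈ Set.Ioo δ r, HasDerivAt (fun s => v s * Real.exp (-(s / δ)))
      (v' y * Real.exp (-(y / δ)) + v y * (Real.exp (-(y / δ)) * (-(1 / δ)))) y := by
    intro y hy
    have hyI : y ∈ I := hsub2 ⟨hy.1.le, hy.2.le⟩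
    have hIy : I ∈ nhds y := mem_nhds_iff.mpr
      ⟨Set.Ioo δ r, fun z hz => hsub2 ⟨hz.1.le, hz.2.le⟩, isOpen_Ioo, hy⟩
    have hdv : HasDerivAt v (v' y) y := (hd1 y hyI).hasDerivAt hIy
    have hlin : HasDerivAt (fun s : ℝ => -(s / δ)) (-(1 / δ)) y := by
      exact ((hasDerivAt_id y).div_const δ).neg
    exact hdv.mul hlin.exp
  have hanti : AntitoneOn (fun s => v s * Real.exp (-(s / δ))) (Set.Icc δ r) := by
    apply antitoneOn_of_deriv_nonpos (convex_Icc δ r)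
    · exact ContinuousOn.mul (hvc.mono hsub2)
        ((Real.continuous_exp.comp ((continuous_id.div_const δ).neg)).continuousOn)
    · intro y hy
      rw [interior_Icc] at hy
      exact (hgd y hy).differentiableAt.differentiableWithinAt
    · intro y hy
      rw [interior_Icc] at hy
      rw [(hgd y hy).deriv]
      have hww := wpos y ⟨hy.1.le, hy.2.le⟩
      have hE : 0 < Real.exp (-(y / δ)) := Real.exp_pos _
      have hle' : v' y ≤ v y / δ := by
        rw [le_div_iff₀ hδpos]
        nlinarith
      have hrw : v' y * Real.exp (-(y / δ)) + v y * (Real.exp (-(y / δ)) * -(1 / δ))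
          = -(Real.exp (-(y / δ)) * (v y / δ - v' y)) := by ring
      rw [hrw]
      exact neg_nonpos.mpr (mul_nonneg hE.le (sub_nonneg.mpr hle'))
  have hgle := hanti (Set.left_mem_Icc.mpr hδr) (Set.right_mem_Icc.mpr hδr) hδr
  simp only at hgle
  -- hgle : v r * exp (-(r/δ)) ≤ v δ * exp (-(δ/δ))
  have hb1 : v r ≤ v δ * Real.exp (r / δ) := by
    rw [div_self hδpos.ne'] at hgle
    have h8 : Real.exp (-(1:ℝ)) ≤ 1 := by
      rw [show (1:ℝ) = Real.exp 0 by rw [Real.exp_zero]]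
      exact Real.exp_le_exp.mpr (by norm_num)
    have h9 : v δ * Real.exp (-(1:ℝ)) ≤ v δ := by nlinarith
    have h10 : v r * Real.exp (-(r / δ)) ≤ v δ := le_trans hgle h9
    rw [Real.exp_neg] at h10
    have h11 := mul_le_mul_of_nonneg_right h10 (Real.exp_pos (r / δ)).le
    rwa [mul_assoc, inv_mul_cancel₀ (Real.exp_pos _).ne', mul_one] at h11
  refine ⟨hwr, hb1, ?_⟩
  have h12 : δ * v' r ≤ v δ * Real.exp (r / δ) := by linarith
  rw [div_mul_eq_mul_div, le_div_iff₀ hδpos]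
  linarith
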